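/- Let r > 0, let a satisfy 0 < a ≤ r/2, and let δ satisfy 0 < δ ≤ a/4. Define the points t₂ = (a/2, −√(4r² − a²)/2) and t₁ = ((δ² + 2rδ + a²)/(2a), √(((2r + δ)² − a²)(a² − δ²))/(2a)) in ℝ². Then every point q ∈ ℝ² with dist(q, t₁) ≤ r and dist(q, t₂) ≤ r satisfies ‖q‖ > 2δ. -/

import Mathlib

set_option maxHeartbeats 1000000

theorem keypoly (r a δ : ℝ) (hr : 0 < r) (ha : 0 < a) (har : a ≤ r / 2)
    (hδ : 0 < δ) (hδa : δ ≤ a / 4) :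
    a ^ 2 * (28*r^2 + 12*r*δ + 8*a^2 - 57*δ^2)^2
      < 64 * (4*r^2 - a^2) * ((2*r+δ)^2 - a^2) * (a^2 - δ^2) := by
  set s : ℝ := r - 2*a with hs'
  set t : ℝ := a - 4*δ with ht'
  have hs : 0 ≤ s := by rw [hs']; linarith
  have ht : 0 ≤ t := by rw [ht']; linarith
  have hra : r = s + 2*t + 8*δ := by rw [hs', ht']; ring
  have haa : a = t + 4*δ := by rw [ht']; ring
  rw [hra, haa]
  nlinarith [pow_pos hδ 6, mul_nonneg ht (pow_pos hδ 5).le, mul_nonneg (pow_nonneg ht 2) (pow_pos hδ 4).le, mul_nonneg (pow_nonneg ht 3) (pow_pos hδ 3).le, mul_nonneg (pow_nonneg ht 4) (pow_pos hδ 2).le, mul_nonneg (pow_nonneg ht 5) hδ.le, mul_nonneg hs (pow_pos hδ 5).le, mul_nonneg (mul_nonneg hs ht) (pow_pos hδ 4).le, mul_nonneg (mul_nonneg hs (pow_nonneg ht 2)) (pow_pos hδ 3).le, mul_nonneg (mul_nonneg hs (pow_nonneg ht 3)) (pow_pos hδ 2).le, mul_nonneg (mul_nonneg hs (pow_nonneg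 ht 4)) hδ.le, mul_nonneg hs (pow_nonneg ht 5), mul_nonneg (pow_nonneg hs 2) (pow_pos hδ 4).le, mul_nonneg (mul_nonneg (pow_nonneg hs 2) ht) (pow_pos hδ 3).le, mul_nonneg (mul_nonneg (pow_nonneg hs 2) (pow_nonneg ht 2)) (pow_pos hδ 2).le, mul_nonneg (mul_nonneg (pow_nonneg hs 2) (pow_nonneg ht 3)) hδ.le, mul_nonneg (pow_nonneg hs 2) (pow_nonneg ht 4), mul_nonneg (pow_nonneg hs 3) (pow_pos hδ 3).le, mul_nonneg (mul_nonneg (pow_nonneg hs 3) ht) (pow_pos hδ 2).le, mul_nonneg (mul_nonneg (pow_nonneg hs 3) (pow_nonneg ht 2)) hδ.le, mul_nonneg (pow_nonneg hs 3) (pow_nonneg ht 3), mul_nonneg (pow_nonneg hs 4) (pow_pos hδ 2).le, mul_nonneg (mul_nonneg (pow_nonneg hs 4) ht) hδ.le, mul_nonneg (pow_nonneg hs 4) (pow_nonneg ht 2)]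

theorem auxAB (a r δ n : ℝ) (ha : 0 < a) (hδ : 0 < δ) (hn0 : 0 ≤ n)
    (hn4 : n ≤ 4*δ^2) (hr8 : 8*δ ≤ r) :
    16*a^2*(n*(a^2*(2*r + 9*δ)^2/4)) ≤ (8*a^2*(n + (r*δ + δ^2/2)))^2 := by
  have hf2 : 0 ≤ (r*δ + δ^2/2)^2 - 4*δ^2*n := by
    nlinarith [hn4, mul_pos hδ hδ, mul_nonneg (sub_nonneg.mpr hr8) hδ.le,
      mul_nonneg (mul_nonneg (sub_nonneg.mpr hr8) hδ.le) (mul_pos hδ hδ).le,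
      mul_nonneg (mul_nonneg (sub_nonneg.mpr hr8) (sub_nonneg.mpr hr8)) (mul_pos hδ hδ).le]
  have hfac : 0 ≤ a^4 * ((4*δ^2 - n) * ((r*δ + δ^2/2)^2 - 4*δ^2*n)) :=
    mul_nonneg (by positivity) (mul_nonneg (by linarith) hf2)
  nlinarith [hfac, mul_pos hδ hδ]

theorem stmt_2 (r a δ : ℝ) (hr : 0 < r) (ha : 0 < a) (har : a ≤ r / 2)
    (hδ : 0 < δ) (hδa : δ ≤ a / 4)
    (t₁ t₂ : EuclideanSpace ℝ (Fin 2))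
    (ht₂ : t₂ = ![a / 2, -Real.sqrt (4 * r ^ 2 - a ^ 2) / 2])
    (ht₁ : t₁ = ![(δ ^ 2 + 2 * r * δ + a ^ 2) / (2 * a),
        Real.sqrt (((2 * r + δ) ^ 2 - a ^ 2) * (a ^ 2 - δ ^ 2)) / (2 * a)]) :
    ∀ q : EuclideanSpace ℝ (Fin 2),
      dist q t₁ ≤ r → dist q t₂ ≤ r → 2 * δ < ‖q‖ := by
  intro q hq1 hq2
  set s1 : ℝ := Real.sqrt (4 * r ^ 2 - a ^ 2) with hs1'
  set s2 : ℝ := Real.sqrt (((2 * r + δ) ^ 2 - a ^ 2) * (a ^ 2 - δ ^ 2)) with hs2'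
  have hs1nn : 0 ≤ s1 := Real.sqrt_nonneg _
  have hs2nn : 0 ≤ s2 := Real.sqrt_nonneg _
  have hs1sq : s1 ^ 2 = 4 * r ^ 2 - a ^ 2 := Real.sq_sqrt (by nlinarith)
  have hs2sq : s2 ^ 2 = ((2 * r + δ) ^ 2 - a ^ 2) * (a ^ 2 - δ ^ 2) :=
    Real.sq_sqrt (mul_nonneg (by nlinarith) (by nlinarith))
  set x : ℝ := q 0 with hx'
  set y : ℝ := q 1 with hy'
  -- squared distance inequalities
  have hd1 : (x - (δ ^ 2 + 2 * r * δ + a ^ 2) / (2 * a)) ^ 2 + (y - s2 / (2 * a)) ^ 2 ≤ r ^ 2 := by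
    have h := pow_le_pow_left₀ dist_nonneg hq1 2
    rw [EuclideanSpace.dist_eq, Real.sq_sqrt (by positivity)] at h
    simpa [ht₁, Fin.sum_univ_two, Real.dist_eq, sq_abs] using h
  have hd2 : (x - a / 2) ^ 2 + (y + s1 / 2) ^ 2 ≤ r ^ 2 := by
    have h := pow_le_pow_left₀ dist_nonneg hq2 2
    rw [EuclideanSpace.dist_eq, Real.sq_sqrt (by positivity)] at h
    simp [ht₂, Fin.sum_univ_two, Real.dist_eq, sq_abs] at h
    convert h using 2
    · rfl
    ring
  -- scaled (denominator-free) versions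
  have hd1s : (2*a*x - (δ ^ 2 + 2 * r * δ + a ^ 2)) ^ 2 + (2*a*y - s2) ^ 2 ≤ 4*a^2*r^2 := by
    have e : (2*a*x - (δ ^ 2 + 2 * r * δ + a ^ 2)) ^ 2 + (2*a*y - s2) ^ 2
        = (2*a)^2 * ((x - (δ ^ 2 + 2 * r * δ + a ^ 2) / (2 * a)) ^ 2 + (y - s2 / (2 * a)) ^ 2) := by
      field_simp
    rw [e]
    calc (2*a)^2 * ((x - (δ ^ 2 + 2 * r * δ + a ^ 2) / (2 * a)) ^ 2 + (y - s2 / (2 * a)) ^ 2)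
        ≤ (2*a)^2 * r^2 := by
          apply mul_le_mul_of_nonneg_left hd1 (by positivity)
      _ = 4*a^2*r^2 := by ring
  have hd2s : a^2*((2*x - a) ^ 2 + (2*y + s1) ^ 2) ≤ a^2*(4*r^2) := by
    apply mul_le_mul_of_nonneg_left _ (sq_nonneg a)
    nlinarith [hd2]
  -- algebraic identities
  have hid1 : (δ ^ 2 + 2 * r * δ + a ^ 2)^2 + s2^2 = 4*a^2*(r+δ)^2 := by
    rw [hs2sq]; ring
  have hid2 : a^4 + a^2*s1^2 = 4*a^2*r^2 := by
    rw [hs1sq]; ring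
  -- the linear lower bound (scaled by 4a)
  have hsum : 8*a^2*(x^2 + y^2 + (r*δ + δ^2/2))
      ≤ 4*a*(x*((δ ^ 2 + 2 * r * δ + a ^ 2) + a^2) + y*(s2 - a*s1)) := by
    linarith [hd1s, hd2s, hid1, hid2]
  -- Cauchy–Schwarz
  have hCS : (x*((δ ^ 2 + 2 * r * δ + a ^ 2) + a^2) + y*(s2 - a*s1))^2
      ≤ (x^2 + y^2) * (((δ ^ 2 + 2 * r * δ + a ^ 2) + a^2)^2 + (s2 - a*s1)^2) := by
    nlinarith [sq_nonneg (x*(s2 - a*s1) - y*((δ ^ 2 + 2 * r * δ + a ^ 2) + a^2))]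
  -- bound on the squared norm of w (scaled by 4a^2)
  have hK := keypoly r a δ hr ha har hδ hδa
  have hss : a * (28*r^2 + 12*r*δ + 8*a^2 - 57*δ^2) < 8 * (s1 * s2) := by
    have e : (8*(s1*s2))^2 = 64 * (4*r^2 - a^2) * ((2*r+δ)^2 - a^2) * (a^2 - δ^2) := by
      rw [mul_pow, mul_pow, hs1sq, hs2sq]; ring
    have h2 : (a * (28*r^2 + 12*r*δ + 8*a^2 - 57*δ^2))^2 < (8*(s1*s2))^2 := by
      rw [e]; nlinarith [hK]
    exact lt_of_pow_lt_pow_left₀ 2 (by positivity) h2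
  have hssa : 2*a*(a * (28*r^2 + 12*r*δ + 8*a^2 - 57*δ^2)) < 2*a*(8 * (s1 * s2)) :=
    mul_lt_mul_of_pos_left hss (by positivity)
  have hW : ((δ ^ 2 + 2 * r * δ + a ^ 2) + a^2)^2 + (s2 - a*s1)^2
      < a^2*(2*r + 9*δ)^2/4 := by
    linarith [hssa, hid1, hid2]
  clear hd1 hd2 hd1s hd2s hid1 hid2 hK hss hssa hq1 hq2 ht₁ ht₂ hs1sq hs2sq hs1nn hs2nn hs1' hs2' hx' hy'
  -- suppose the conclusion fails
  by_contra hcon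
  push_neg at hcon
  have hnormsq : ‖q‖ ^ 2 = x ^ 2 + y ^ 2 := by
    rw [EuclideanSpace.norm_eq, Real.sq_sqrt (by positivity)]
    simp [Fin.sum_univ_two, sq_abs]
    rfl
  have hn4 : x ^ 2 + y ^ 2 ≤ 4 * δ ^ 2 := by
    have h := pow_le_pow_left₀ (norm_nonneg q) hcon 2
    rw [hnormsq] at h
    exact le_of_le_of_eq h (by ring)
  have hnpos : 0 < x ^ 2 + y ^ 2 := by
    by_contra hn0
    push_neg at hn0
    have hxx : x ^ 2 = 0 := le_antisymm (by nlinarith [sq_nonneg y]) (sq_nonneg x)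
    have hyy : y ^ 2 = 0 := le_antisymm (by nlinarith [sq_nonneg x]) (sq_nonneg y)
    have hx0 : x = 0 := by
      have := sq_eq_zero_iff.mp hxx; exact this
    have hy0 : y = 0 := by
      have := sq_eq_zero_iff.mp hyy; exact this
    rw [hx0, hy0] at hsum
    nlinarith [hsum, mul_pos hr hδ, mul_pos ha ha, mul_pos (mul_pos ha ha) (mul_pos hr hδ)]
  -- now derive the contradiction
  have hr8 : 8*δ ≤ r := by linarith
  have hc2pos : 0 < x^2 + y^2 + (r*δ + δ^2/2) := by nlinarith [mul_pos hr hδ]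
  have h8pos : 0 < 8*a^2*(x^2 + y^2 + (r*δ + δ^2/2)) := by positivity
  have hSq : (8*a^2*(x^2 + y^2 + (r*δ + δ^2/2)))^2
      ≤ (4*a*(x*((δ ^ 2 + 2 * r * δ + a ^ 2) + a^2) + y*(s2 - a*s1)))^2 :=
    pow_le_pow_left₀ h8pos.le hsum 2
  have hCS16 : 16*a^2*((x*((δ ^ 2 + 2 * r * δ + a ^ 2) + a^2) + y*(s2 - a*s1))^2)
      ≤ 16*a^2*((x^2 + y^2) * (((δ ^ 2 + 2 * r * δ + a ^ 2) + a^2)^2 + (s2 - a*s1)^2)) :=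
    mul_le_mul_of_nonneg_left hCS (by positivity)
  have h5 : (x^2+y^2) * (((δ ^ 2 + 2 * r * δ + a ^ 2) + a^2)^2 + (s2 - a*s1)^2)
      < (x^2+y^2) * (a^2*(2*r + 9*δ)^2/4) :=
    mul_lt_mul_of_pos_left hW hnpos
  have h5' : 16*a^2*((x^2+y^2) * (((δ ^ 2 + 2 * r * δ + a ^ 2) + a^2)^2 + (s2 - a*s1)^2))
      < 16*a^2*((x^2+y^2) * (a^2*(2*r + 9*δ)^2/4)) :=
    mul_lt_mul_of_pos_left h5 (by positivity)
  have hAB : 16*a^2*((x^2+y^2) * (a^2*(2*r + 9*δ)^2/4))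
      ≤ (8*a^2*(x^2 + y^2 + (r*δ + δ^2/2)))^2 :=
    auxAB a r δ (x^2+y^2) ha hδ (by positivity) hn4 hr8
  linarith [hSq, hCS16, h5', hAB]
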